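/- arXiv:1608.07987 — 4 statements merged into one kernel-verified Lean document; each statement's English description precedes it below -/
import Mathlib

section
/- Fix f ≥ 1, a prime p, and µ ∈ (Z^2)^f with each µ_i = (a_i, b_i) satisfying 2 ≤ a_i - b_i ≤ p - 2 (µ - η is 1-deep). Define t'_µ : Z^f → (Z^2)^f by the extension-graph formula t'_µ(ω_J + ν) = w̃_J · (µ + ν + ω_J - η) using the p-dot action, and let t_µ be its composition with reduction modulo (p - π)X^0(T), where X^0(T) is the lattice spanned by the determinant characters det∘ι_i and π is the cyclic shift. Then t_µ is injective on Λ_W^µ := {ω ∈ Z^f : t_µ(ω) lies in the lowest restricted alcove C_0 mod (p-π)X^0(T)}. -/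
namespace ExtGraph

variable (f : ℕ) [NeZero f]

/-- The extension-graph map `t'_µ : Λ_W = ℤ^f → X^*(T) = (ℤ²)^f`, written out explicitly.
Decompose `ω_i = 2c_i + j_i` with `j_i ∈ {0,1}` (so `ω = ω_J + ν` with `i ∈ J ↔ j_i = 1`,
`ν ∈ Λ_R` embedded as `(c_i, -c_i)`).  Then `t'_µ(ω) = w̃_J·(µ + ν + ω_J - η)` for the
`p`-dot action of `w̃_J = w_J t_{-π⁻¹ω_J} ∈ Ω`, which in component `i` is
`(a_i + c_i + j_i - 1, b_i - c_i)` if `i-1 ∉ J`, and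
`(b_i - c_i - 1, a_i + c_i + j_i - p)` if `i-1 ∈ J`. -/
def tprime (p : ℤ) (μ : Fin f → ℤ × ℤ) (ω : Fin f → ℤ) : Fin f → ℤ × ℤ := fun i =>
  let j : ℤ := ω i % 2
  let c : ℤ := ω i / 2
  let a : ℤ := (μ i).1
  let b : ℤ := (μ i).2
  if ω (i - 1) % 2 = 1 then (b - c - 1, a + c + j - p)
  else (a + c + j - 1, b - c)

/-- Congruence modulo the subgroup `(p - π)X^0(T)`, where `X^0(T)` is spanned by the
determinant characters `(1,1)^(i)` and `π` is the cyclic shift:  `λ₁ ≡ λ₂` iff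
`λ₁ - λ₂ = Σ_i m_i (p·(1,1)^(i) - (1,1)^(i+1))`, i.e. componentwise
`λ₁ i - λ₂ i = (p·m_i - m_{i-1})·(1,1)`. -/
def EquivMod (p : ℤ) (l₁ l₂ : Fin f → ℤ × ℤ) : Prop :=
  ∃ m : Fin f → ℤ, ∀ i, l₁ i - l₂ i = (p * m i - m (i - 1), p * m i - m (i - 1))

/-- Membership in the lowest restricted alcove `C_0 = X_1(T) - η`:
`0 ≤ ⟨λ + η, α_i^∨⟩ < p` for all `i`. -/
def InC0 (p : ℤ) (l : Fin f → ℤ × ℤ) : Prop :=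
  ∀ i, 0 ≤ (l i).1 - (l i).2 + 1 ∧ (l i).1 - (l i).2 + 1 < p

/-- `Λ_W^µ = {ω ∈ ℤ^f : t_µ(ω) ∈ C_0 + (p-π)X^0(T)}`. -/
def InLambdaWμ (p : ℤ) (μ : Fin f → ℤ × ℤ) (ω : Fin f → ℤ) : Prop :=
  ∃ l, InC0 f p l ∧ EquivMod f p (tprime f p μ ω) l

/-- Proposition 2.4:  if `µ - η` is `1`-deep (i.e. `2 ≤ a_i - b_i ≤ p - 2` for all `i`),
then `t_µ` (the composite of `t'_µ` with reduction mod `(p-π)X^0(T)`) is injective on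
`Λ_W^µ`. -/
theorem tmu_injective (p : ℤ) (hp : Prime p)
    (μ : Fin f → ℤ × ℤ)
    (hμ : ∀ i, 2 ≤ (μ i).1 - (μ i).2 ∧ (μ i).1 - (μ i).2 ≤ p - 2)
    (ω ω' : Fin f → ℤ)
    (hω : InLambdaWμ f p μ ω) (hω' : InLambdaWμ f p μ ω')
    (h : EquivMod f p (tprime f p μ ω) (tprime f p μ ω')) :
    ω = ω' := by
  obtain ⟨m, hm⟩ := h
  have hμ0 := hμ 0
  have hp5 : 5 ≤ p := by
    by_contra hlt
    have h4 : p = 4 := by omega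
    rw [h4] at hp
    norm_num at hp
  have hodd : p % 2 = 1 := by
    rcases Int.emod_two_eq p with h2 | h2
    · exfalso
      obtain ⟨k, hk⟩ := Int.dvd_of_emod_eq_zero h2
      rcases hp.irreducible.isUnit_or_isUnit hk with hu | hu <;>
        rw [Int.isUnit_iff] at hu <;> omega
    · exact h2
  have hstep : ∀ i : Fin f, ω (i - 1) % 2 ≠ ω' (i - 1) % 2 →
      ω i % 2 ≠ ω' i % 2 ∧
      ((ω (i-1) % 2 - ω' (i-1) % 2 = 1 ∧
          ω i % 2 - ω' i % 2 - p = 2 * (p * m i) - 2 * m (i - 1)) ∨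
       (ω (i-1) % 2 - ω' (i-1) % 2 = -1 ∧
          ω i % 2 - ω' i % 2 + p = 2 * (p * m i) - 2 * m (i - 1))) := by
    intro i hne
    have h1 := hm i
    generalize hP : p * m i = P at h1 ⊢
    rcases Int.emod_two_eq (ω (i - 1)) with hc | hc <;>
      rcases Int.emod_two_eq (ω' (i - 1)) with hc' | hc'
    · omega
    · simp [tprime, hc, hc', Prod.ext_iff, Prod.fst_sub, Prod.snd_sub] at h1
      exact ⟨by omega, Or.inr ⟨by omega, by omega⟩⟩
    · simp [tprime, hc, hc', Prod.ext_iff, Prod.fst_sub, Prod.snd_sub] at h1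
      exact ⟨by omega, Or.inl ⟨by omega, by omega⟩⟩
    · omega
  have heq0 : ∀ i : Fin f, ω (i - 1) % 2 = ω' (i - 1) % 2 → ω i = ω' i := by
    intro i hpe
    have h1 := hm i
    generalize hP : p * m i = P at h1
    rcases Int.emod_two_eq (ω (i - 1)) with hc | hc
    · have hc' : ω' (i - 1) % 2 = 0 := by omega
      simp [tprime, hc, hc', Prod.ext_iff, Prod.fst_sub, Prod.snd_sub] at h1
      omega
    · have hc' : ω' (i - 1) % 2 = 1 := by omega
      simp [tprime, hc, hc', Prod.ext_iff, Prod.fst_sub, Prod.snd_sub] at h1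
      omega
  by_cases hpar : ∀ i, ω i % 2 = ω' i % 2
  · funext i
    exact heq0 i (hpar (i - 1))
  · exfalso
    push_neg at hpar
    obtain ⟨i₀, hi₀⟩ := hpar
    open Fin.NatCast in
    have hall : ∀ k : ℕ, ω (i₀ + (k : Fin f)) % 2 ≠ ω' (i₀ + (k : Fin f)) % 2 := by
      intro k
      induction k with
      | zero => simpa using hi₀
      | succ k ih =>
        have hcast : ((k + 1 : ℕ) : Fin f) = (k : Fin f) + 1 := by push_cast; ring
        rw [hcast, ← add_assoc]
        have hsub : (i₀ + (k : Fin f) + 1) - 1 = i₀ + (k : Fin f) := by abel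
        exact (hstep _ (by rw [hsub]; exact ih)).1
    have hall' : ∀ i : Fin f, ω i % 2 ≠ ω' i % 2 := by
      intro i
      open Fin.NatCast in
      have hi : i₀ + (((i - i₀).val : ℕ) : Fin f) = i := by
        rw [Fin.cast_val_eq_self]; abel
      have := hall (i - i₀).val
      rwa [hi] at this
    have : Nonempty (Fin f) := ⟨0⟩
    obtain ⟨iM, hM⟩ := Finite.exists_max m
    obtain ⟨im, hmin⟩ := Finite.exists_min m
    have hMle : m iM ≤ 0 := by
      by_contra hpos
      push_neg at hpos
      have h1 : (p - 1) * 1 ≤ (p - 1) * m iM :=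
        mul_le_mul_of_nonneg_left (by omega) (by omega)
      have h2 : ω iM % 2 - ω' iM % 2 ≤ 1 ∧ -1 ≤ ω iM % 2 - ω' iM % 2 := by omega
      have h3 := hM (iM - 1)
      rcases (hstep iM (hall' _)).2 with ⟨he, heq2⟩ | ⟨he, heq2⟩ <;>
        nlinarith [heq2, h1, h2.1, h2.2, h3, hp5]
    have hmge : 0 ≤ m im := by
      by_contra hneg
      push_neg at hneg
      have h1 : (p - 1) * m im ≤ (p - 1) * (-1) :=
        mul_le_mul_of_nonneg_left (by omega) (by omega)
      have h2 : ω im % 2 - ω' im % 2 ≤ 1 ∧ -1 ≤ ω im % 2 - ω' im % 2 := by omega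
      have h3 := hmin (im - 1)
      rcases (hstep im (hall' _)).2 with ⟨he, heq2⟩ | ⟨he, heq2⟩ <;>
        nlinarith [heq2, h1, h2.1, h2.2, h3, hp5]
    have hz : ∀ i, m i = 0 := fun i => le_antisymm ((hM i).trans hMle) (hmge.trans (hmin i))
    have hP0 : p * m 0 = 0 := by rw [hz 0, mul_zero]
    have hz2 : m (0 - 1) = 0 := hz _
    have h2 : ω 0 % 2 - ω' 0 % 2 = 1 ∨ ω 0 % 2 - ω' 0 % 2 = -1 := by
      have := hall' 0; omega
    rcases (hstep 0 (hall' _)).2 with ⟨he, heq2⟩ | ⟨he, heq2⟩ <;>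
      rcases h2 with h2 | h2 <;> linarith [heq2, hP0, hz2, hp5]

end ExtGraph
end

section
/- Let S = {±e_0,...,±e_{f-1}} ⊂ Z^f. Suppose J, J' ⊆ S satisfy: k_i(J') ≥ k_i(J) for all i with Σ_i k_i(J') = Σ_i k_i(J) + 1 (where k_i(J) = #(J ∩ {±e_{i-1}})), and ω_{J'} - ω_J = ±e_j for some j. Then J ⊂ J' and #(J' \ J) = 1. -/
namespace SignedSubsets7

variable (f : ℕ) [NeZero f]

/-- A subset `J ⊆ S = {±e_0,…,±e_{f-1}}` is modelled as a `Finset (Fin f × Bool)`,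
`(l, true) ↦ +e_l`, `(l, false) ↦ -e_l`.  `ω_J ∈ ℤ^f` is the signed sum of `J`. -/
def omegaJ (J : Finset (Fin f × Bool)) : Fin f → ℤ := fun i =>
  ∑ x ∈ J, if x.1 = i then (if x.2 then 1 else -1) else 0

/-- `k_i(J) = #(J ∩ {±e_{i-1}}) ∈ {0,1,2}`. -/
def kvec (J : Finset (Fin f × Bool)) : Fin f → ℕ := fun i =>
  (J.filter fun x => x.1 = i - 1).card

omit [NeZero f] in
lemma omegaJ_eq (J : Finset (Fin f × Bool)) (l : Fin f) :
    omegaJ f J l = (if (l, true) ∈ J then (1:ℤ) else 0) - (if (l, false) ∈ J then 1 else 0) := by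
  unfold omegaJ
  have : ∀ x : Fin f × Bool,
      (if x.1 = l then (if x.2 then (1:ℤ) else -1) else 0)
        = (if x = (l, true) then (1:ℤ) else 0) - (if x = (l, false) then 1 else 0) := by
    rintro ⟨m, b⟩
    by_cases hm : m = l <;> cases b <;> simp [hm, Prod.ext_iff]
  rw [Finset.sum_congr rfl fun x _ => this x, Finset.sum_sub_distrib,
    Finset.sum_ite_eq' J (l, true), Finset.sum_ite_eq' J (l, false)]

omit [NeZero f] in
lemma filter_card_eq (J : Finset (Fin f × Bool)) (l : Fin f) :
    (J.filter fun x => x.1 = l).card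
      = (if (l, true) ∈ J then 1 else 0) + (if (l, false) ∈ J then 1 else 0) := by
  rw [Finset.card_filter]
  have : ∀ x : Fin f × Bool,
      (if x.1 = l then 1 else 0)
        = (if x = (l, true) then 1 else 0) + (if x = (l, false) then 1 else 0) := by
    rintro ⟨m, b⟩
    by_cases hm : m = l <;> cases b <;> simp [hm, Prod.ext_iff]
  rw [Finset.sum_congr rfl fun x _ => this x, Finset.sum_add_distrib,
    Finset.sum_ite_eq' J (l, true), Finset.sum_ite_eq' J (l, false)]

lemma sum_kvec (J : Finset (Fin f × Bool)) : ∑ i, kvec f J i = J.card := by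
  unfold kvec
  have h := Fintype.sum_equiv (Equiv.subRight (1 : Fin f))
    (fun i => (J.filter fun x => x.1 = i - 1).card)
    (fun j => (J.filter fun x => x.1 = j).card) (fun i => rfl)
  rw [h]
  exact (Finset.card_eq_sum_card_fiberwise (f := fun x : Fin f × Bool => x.1) (s := J)
    (t := Finset.univ) (fun x _ => Finset.mem_univ _)).symm

/-- If `k_i(J') ≥ k_i(J)` for all `i`, `Σ_i k_i(J') = Σ_i k_i(J) + 1`, and
`ω_{J'} - ω_J = ±e_j` for some `j`, then `J ⊆ J'` and `#(J' \ J) = 1`. -/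
theorem subset_of_kvec_and_omega
    (J J' : Finset (Fin f × Bool))
    (h1 : ∀ i, kvec f J i ≤ kvec f J' i)
    (h2 : ∑ i, kvec f J' i = (∑ i, kvec f J i) + 1)
    (h3 : ∃ (j : Fin f) (s : ℤ), (s = 1 ∨ s = -1) ∧
      ∀ i, omegaJ f J' i - omegaJ f J i = if i = j then s else 0) :
    J ⊆ J' ∧ (J' \ J).card = 1 := by
  obtain ⟨j, s, hs, hd⟩ := h3
  have hsub : J ⊆ J' := by
    intro x hx
    obtain ⟨l, b⟩ := x
    have hk := h1 (l + 1)
    unfold kvec at hk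
    simp only [add_sub_cancel_right] at hk
    rw [filter_card_eq, filter_card_eq] at hk
    have hdl := hd l
    rw [omegaJ_eq, omegaJ_eq] at hdl
    have hdl2 :
        ((if (l, true) ∈ J' then (1:ℤ) else 0) - (if (l, false) ∈ J' then 1 else 0))
          - ((if (l, true) ∈ J then (1:ℤ) else 0) - (if (l, false) ∈ J then 1 else 0)) = 0 ∨
        ((if (l, true) ∈ J' then (1:ℤ) else 0) - (if (l, false) ∈ J' then 1 else 0))
          - ((if (l, true) ∈ J then (1:ℤ) else 0) - (if (l, false) ∈ J then 1 else 0)) = 1 ∨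
        ((if (l, true) ∈ J' then (1:ℤ) else 0) - (if (l, false) ∈ J' then 1 else 0))
          - ((if (l, true) ∈ J then (1:ℤ) else 0) - (if (l, false) ∈ J then 1 else 0)) = -1 := by
      by_cases hlj : l = j
      · rw [if_pos hlj] at hdl
        rcases hs with h | h <;> subst h <;> omega
      · rw [if_neg hlj] at hdl
        omega
    cases b with
    | true =>
      by_contra hat
      by_cases haf : (l, false) ∈ J' <;> by_cases hbf : (l, false) ∈ J <;>
        simp only [hx, hat, haf, hbf, if_true, if_false, if_pos, if_neg,
          not_false_eq_true, not_true] at hk hdl2 <;> omega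
    | false =>
      by_contra haf
      by_cases hat : (l, true) ∈ J' <;> by_cases hbt : (l, true) ∈ J <;>
        simp only [hx, hat, haf, hbt, if_true, if_false, if_pos, if_neg,
          not_false_eq_true, not_true] at hk hdl2 <;> omega
  refine ⟨hsub, ?_⟩
  have hc : J'.card = J.card + 1 := by rw [← sum_kvec f J', ← sum_kvec f J, h2]
  rw [Finset.card_sdiff_of_subset hsub, hc, Nat.add_sub_cancel_left]

end SignedSubsets7
end

section
/- Let S = {±e_0,...,±e_{f-1}} ⊂ Z^f. Suppose J, J' ⊆ S satisfy ω_J = ω_{J'} and k_i(J') ≥ k_i(J) for all i with k(J') ≠ k(J). Then J ⊂ J'. (More precisely, for each i, either J' ∩ {±e_{i-1}} = J ∩ {±e_{i-1}}, or J ∩ {±e_{i-1}} = ∅.) -/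
namespace SignedSubsets8

variable (f : ℕ) [NeZero f]

/-- A subset `J ⊆ S = {±e_0,…,±e_{f-1}}` is modelled as a `Finset (Fin f × Bool)`,
`(l, true) ↦ +e_l`, `(l, false) ↦ -e_l`.  `ω_J ∈ ℤ^f` is the signed sum of `J`. -/
def omegaJ (J : Finset (Fin f × Bool)) : Fin f → ℤ := fun i =>
  ∑ x ∈ J, if x.1 = i then (if x.2 then 1 else -1) else 0

/-- `k_i(J) = #(J ∩ {±e_{i-1}}) ∈ {0,1,2}`. -/
def kvec (J : Finset (Fin f × Bool)) : Fin f → ℕ := fun i =>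
  (J.filter fun x => x.1 = i - 1).card


omit [NeZero f] in
lemma omega_eq (J : Finset (Fin f × Bool)) (j : Fin f) :
    omegaJ f J j = (if (j, true) ∈ J then (1:ℤ) else 0) +
      (if (j, false) ∈ J then (-1:ℤ) else 0) := by
  unfold omegaJ
  have h : ∀ x : Fin f × Bool,
      (if x.1 = j then (if x.2 then (1:ℤ) else -1) else 0) =
      (if x = (j, true) then (1:ℤ) else 0) + (if x = (j, false) then (-1:ℤ) else 0) := by
    rintro ⟨a, b⟩
    cases b <;> by_cases h : a = j <;> simp [h, Prod.ext_iff]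
  rw [Finset.sum_congr rfl fun x _ => h x, Finset.sum_add_distrib,
    Finset.sum_ite_eq' J, Finset.sum_ite_eq' J]

omit [NeZero f] in
lemma card_fiber (J : Finset (Fin f × Bool)) (j : Fin f) :
    (J.filter fun x => x.1 = j).card =
      (if (j, true) ∈ J then 1 else 0) + (if (j, false) ∈ J then 1 else 0) := by
  rw [Finset.card_filter]
  have h : ∀ x : Fin f × Bool,
      (if x.1 = j then (1:ℕ) else 0) =
      (if x = (j, true) then (1:ℕ) else 0) + (if x = (j, false) then (1:ℕ) else 0) := by
    rintro ⟨a, b⟩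
    cases b <;> by_cases h : a = j <;> simp [h, Prod.ext_iff]
  rw [Finset.sum_congr rfl fun x _ => h x, Finset.sum_add_distrib,
    Finset.sum_ite_eq' J, Finset.sum_ite_eq' J]

lemma fiber (J J' : Finset (Fin f × Bool)) (j : Fin f)
    (hω : omegaJ f J j = omegaJ f J' j)
    (hk : (J.filter fun x => x.1 = j).card ≤ (J'.filter fun x => x.1 = j).card) :
    (((j, true) ∈ J' ↔ (j, true) ∈ J) ∧ ((j, false) ∈ J' ↔ (j, false) ∈ J)) ∨
    ((j, true) ∉ J ∧ (j, false) ∉ J) := by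
  rw [omega_eq, omega_eq] at hω
  rw [card_fiber, card_fiber] at hk
  by_cases h1 : (j, true) ∈ J <;> by_cases h2 : (j, false) ∈ J <;>
    by_cases h3 : (j, true) ∈ J' <;> by_cases h4 : (j, false) ∈ J' <;>
    simp [h1, h2, h3, h4] at hω hk ⊢

omit [NeZero f] in
lemma filter_eq_of_iff (J J' : Finset (Fin f × Bool)) (j : Fin f)
    (h1 : (j, true) ∈ J' ↔ (j, true) ∈ J) (h2 : (j, false) ∈ J' ↔ (j, false) ∈ J) :
    (J'.filter fun x => x.1 = j) = (J.filter fun x => x.1 = j) := by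
  ext ⟨a, b⟩
  simp only [Finset.mem_filter]
  cases b <;> constructor <;> rintro ⟨hm, rfl⟩ <;> simp_all

omit [NeZero f] in
lemma filter_empty_of_not (J : Finset (Fin f × Bool)) (j : Fin f)
    (h1 : (j, true) ∉ J) (h2 : (j, false) ∉ J) :
    (J.filter fun x => x.1 = j) = ∅ := by
  rw [Finset.filter_eq_empty_iff]
  rintro ⟨a, b⟩ hm h
  cases b <;> simp_all

/-- If `ω_J = ω_{J'}` and `k(J') ≥ k(J)` componentwise with `k(J') ≠ k(J)`, then
`J ⊂ J'`; more precisely, for each `i` either `J' ∩ {±e_{i-1}} = J ∩ {±e_{i-1}}` or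
`J ∩ {±e_{i-1}} = ∅`. -/
theorem ssubset_of_omega_eq_kvec_le
    (J J' : Finset (Fin f × Bool))
    (hω : omegaJ f J = omegaJ f J')
    (hk : ∀ i, kvec f J i ≤ kvec f J' i)
    (hne : kvec f J ≠ kvec f J') :
    J ⊂ J' ∧ ∀ i : Fin f,
      (J'.filter fun x => x.1 = i - 1) = (J.filter fun x => x.1 = i - 1) ∨
      (J.filter fun x => x.1 = i - 1) = ∅ := by
  have hfib : ∀ j : Fin f,
      (((j, true) ∈ J' ↔ (j, true) ∈ J) ∧ ((j, false) ∈ J' ↔ (j, false) ∈ J)) ∨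
      ((j, true) ∉ J ∧ (j, false) ∉ J) := by
    intro j
    apply fiber f J J' j (congrFun hω j)
    have := hk (j + 1)
    simpa [kvec, add_sub_cancel_right] using this
  have hsub : J ⊆ J' := by
    rintro ⟨a, b⟩ hx
    rcases hfib a with ⟨h1, h2⟩ | ⟨h1, h2⟩
    · cases b
      · exact h2.mpr hx
      · exact h1.mpr hx
    · cases b
      · exact absurd hx h2
      · exact absurd hx h1
  refine ⟨⟨hsub, fun hsub' => hne ?_⟩, fun i => ?_⟩
  · have : J = J' := Finset.Subset.antisymm hsub hsub'
    rw [this]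
  · rcases hfib (i - 1) with ⟨h1, h2⟩ | ⟨h1, h2⟩
    · exact Or.inl (filter_eq_of_iff f J J' _ h1 h2)
    · exact Or.inr (filter_empty_of_not f J _ h1 h2)

end SignedSubsets8
end

section
/- Let k be a field and for each i ∈ {0,...,f-1} let M_i be a finite-dimensional filtered k-vector space with a decreasing filtration Fil^0 M_i ⊇ Fil^1 M_i ⊇ Fil^2 M_i ⊇ Fil^3 M_i = 0. For k = (k_1,...,k_f) ∈ {0,1,2}^f set Fil^k M := ⊗_i Fil^{k_i} M_i ⊆ M := ⊗_i M_i. Then for any k, k' ∈ {0,1,2}^f, Fil^k M ∩ Fil^{k'} M = Fil^{k''} M where k''_i = max(k_i, k'_i). -/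
open scoped TensorProduct

namespace TensorFil10

variable {𝕜 : Type*} [Field 𝕜] {f : ℕ}
variable (𝕜) (M : Fin f → Type*) [∀ i, AddCommGroup (M i)] [∀ i, Module 𝕜 (M i)]

/-- `Fil^k M = ⊗_i Fil^{k_i} M_i ⊆ M = ⊗_i M_i`, the image of the tensor product of the
filtration steps under the canonical (injective, as we are over a field) map. -/
noncomputable def filT (F : ∀ i, ℕ → Submodule 𝕜 (M i)) (k : Fin f → ℕ) :
    Submodule 𝕜 (⨂[𝕜] i, M i) :=
  LinearMap.range (PiTensorProduct.map fun i => (F i (k i)).subtype)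

/-- Monotonicity of the range of the tensor product of inclusions. -/
theorem range_map_subtype_mono (N N' : ∀ i, Submodule 𝕜 (M i)) (h : ∀ i, N i ≤ N' i) :
    LinearMap.range (PiTensorProduct.map (R := 𝕜) fun i => (N i).subtype) ≤
      LinearMap.range (PiTensorProduct.map fun i => (N' i).subtype) := by
  have hcomp : (fun i => (N i).subtype) =
      fun i => (N' i).subtype ∘ₗ Submodule.inclusion (h i) := by
    funext i; ext x; rfl
  rw [hcomp, PiTensorProduct.map_comp]
  exact LinearMap.range_comp_le_range _ _

/-- Lemma 3.9: for finite-dimensional filtered vector spaces `M_i` with decreasing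
filtrations `Fil^0 M_i = M_i ⊇ Fil^1 M_i ⊇ Fil^2 M_i ⊇ Fil^3 M_i = 0` and
`k, k' ∈ {0,1,2}^f`, one has `Fil^k M ∩ Fil^{k'} M = Fil^{k''} M` where
`k''_i = max(k_i, k'_i)`. -/
theorem filT_inf_filT (F : ∀ i, ℕ → Submodule 𝕜 (M i))
    [∀ i, FiniteDimensional 𝕜 (M i)]
    (hF : ∀ i, Antitone (F i)) (hF0 : ∀ i, F i 0 = ⊤) (hF3 : ∀ i, F i 3 = ⊥)
    (k k' : Fin f → ℕ) (hk : ∀ i, k i ≤ 2) (hk' : ∀ i, k' i ≤ 2) :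
    filT 𝕜 M F k ⊓ filT 𝕜 M F k' = filT 𝕜 M F fun i => max (k i) (k' i) := by
  apply le_antisymm
  · -- hard direction
    rintro x hx
    obtain ⟨hx1, hx2⟩ := Submodule.mem_inf.1 hx
    obtain ⟨y, hy⟩ := hx1
    obtain ⟨z, hz⟩ := hx2
    -- choose complements of `F i (k' i)` and corresponding projections
    choose W hW using fun i => (F i (k' i)).exists_isCompl
    set φ : ∀ i, M i →ₗ[𝕜] M i :=
      fun i => (F i (k' i)).subtype ∘ₗ Submodule.linearProjOfIsCompl _ _ (hW i) with hφ
    -- `map φ` fixes `x` since `x ∈ filT F k'`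
    have hfix : PiTensorProduct.map φ x = x := by
      have hcomp : (fun i => φ i ∘ₗ (F i (k' i)).subtype) =
          fun i => (F i (k' i)).subtype := by
        funext i
        ext v
        simp [hφ]
        exact Submodule.projectionOnto_apply_left (hW i) v
      rw [← hz, ← LinearMap.comp_apply, ← PiTensorProduct.map_comp, hcomp]
    -- `φ i` maps `F i (k i)` into `F i (max (k i) (k' i))`
    have key : ∀ i, ∀ a ∈ F i (k i), φ i a ∈ F i (max (k i) (k' i)) := by
      intro i a ha
      rcases le_total (k i) (k' i) with h | h
      · rw [max_eq_right h]
        exact SetLike.coe_mem _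
      · rw [max_eq_left h]
        have ha' : a ∈ F i (k' i) := hF i h ha
        have : φ i a = a := by
          exact
            congrArg (Subtype.val) (Submodule.linearProjOfIsCompl_apply_left (hW i) ⟨a, ha'⟩)
        rwa [this]
    -- corestrict `φ i ∘ subtype` to `F i (max …)`
    set r : ∀ i, (F i (k i) : Submodule 𝕜 (M i)) →ₗ[𝕜] (F i (max (k i) (k' i))) :=
      fun i => LinearMap.codRestrict _ (φ i ∘ₗ (F i (k i)).subtype)
        (fun c => key i c c.2) with hr
    have hfac : (fun i => φ i ∘ₗ (F i (k i)).subtype) =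
        fun i => (F i (max (k i) (k' i))).subtype ∘ₗ r i := by
      funext i; ext v; rfl
    refine ⟨PiTensorProduct.map r y, ?_⟩
    have e1 : PiTensorProduct.map (fun i => (F i (max (k i) (k' i))).subtype)
        (PiTensorProduct.map r y) = PiTensorProduct.map φ x := by
      rw [← hy, ← LinearMap.comp_apply, ← LinearMap.comp_apply,
        ← PiTensorProduct.map_comp, ← PiTensorProduct.map_comp, ← hfac]
    exact e1.trans hfix
  · -- easy direction
    refine le_inf ?_ ?_
    · exact range_map_subtype_mono 𝕜 M _ _ fun i => hF i (le_max_left _ _)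
    · exact range_map_subtype_mono 𝕜 M _ _ fun i => hF i (le_max_right _ _)

end TensorFil10
end
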